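/- arXiv:1903.01191 — 5 statements merged into one kernel-verified Lean document; each statement's English description precedes it below -/
import Mathlib

section
/- A lattice L is distributive if and only if there exists a Banach lattice X and an injective lattice homomorphism from L into X (equivalently, L is lattice-isomorphic to a sublattice of a Banach lattice). -/
open Order BoundedContinuousFunction
open scoped Classical

section Aux

variable (α : Type) [DistribLattice α] [BoundedOrder α]

/-- The set of prime ideals of `α`, as a discrete topological space. -/
def PrimeSpec : Type := {J : Order.Ideal α // Order.Ideal.IsPrime J}

instance : TopologicalSpace (PrimeSpec α) := ⊥
instance : DiscreteTopology (PrimeSpec α) := ⟨rfl⟩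

variable {α}

lemma memSup_iff (a b : α) (J : PrimeSpec α) :
    a ⊔ b ∈ J.1 ↔ a ∈ J.1 ∧ b ∈ J.1 :=
  ⟨fun h => ⟨J.1.lower le_sup_left h, J.1.lower le_sup_right h⟩,
   fun h => J.1.sup_mem h.1 h.2⟩

lemma memInf_iff (a b : α) (J : PrimeSpec α) :
    a ⊓ b ∈ J.1 ↔ a ∈ J.1 ∨ b ∈ J.1 :=
  ⟨fun h => J.2.mem_or_mem h,
   fun h => h.elim (fun h => J.1.lower inf_le_left h) (fun h => J.1.lower inf_le_right h)⟩

variable (α)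

/-- Indicator embedding into bounded functions on prime ideals. -/
noncomputable def embB (a : α) : PrimeSpec α →ᵇ ℝ :=
  BoundedContinuousFunction.mkOfBound
    ⟨fun J => if a ∈ J.1 then (0 : ℝ) else 1, continuous_of_discreteTopology⟩ 1
    (by
      intro J K
      simp only [ContinuousMap.coe_mk]
      split_ifs <;> norm_num [Real.dist_eq])

variable {α}

@[simp] lemma embB_apply (a : α) (J : PrimeSpec α) :
    embB α a J = if a ∈ J.1 then (0 : ℝ) else 1 := rfl

variable (α)

/-- The embedding as a lattice homomorphism. -/
noncomputable def embHom : LatticeHom α (PrimeSpec α →ᵇ ℝ) where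
  toFun := embB α
  map_sup' a b := by
    ext J
    have h := memSup_iff a b J
    simp only [BoundedContinuousFunction.coe_sup, Pi.sup_apply, embB_apply]
    by_cases ha : a ∈ J.1 <;> by_cases hb : b ∈ J.1 <;>
      simp [h, ha, hb, max_def]
  map_inf' a b := by
    ext J
    have h := memInf_iff a b J
    simp only [BoundedContinuousFunction.coe_inf, Pi.inf_apply, embB_apply]
    by_cases ha : a ∈ J.1 <;> by_cases hb : b ∈ J.1 <;>
      simp [h, ha, hb, min_def]

lemma embHom_injective : Function.Injective (embHom α) := by
  have key : ∀ a b : α, embB α a = embB α b → a ≤ b := by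
    intro a b hab
    by_contra hle
    have hdisj : Disjoint ((Order.PFilter.principal a : Order.PFilter α) : Set α)
        ((Order.Ideal.principal b : Order.Ideal α) : Set α) := by
      rw [Set.disjoint_left]
      intro x hx hx'
      exact hle (le_trans (Order.PFilter.mem_principal.mp hx)
        (Order.Ideal.mem_principal.mp hx'))
    obtain ⟨J, hJprime, hIJ, hFJ⟩ :=
      DistribLattice.prime_ideal_of_disjoint_filter_ideal hdisj
    have hbJ : b ∈ J := hIJ (Order.Ideal.mem_principal.mpr le_rfl)
    have haJ : a ∉ J := fun h =>
      Set.disjoint_left.mp hFJ (Order.PFilter.mem_principal.mpr le_rfl) h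
    have heq : embB α a ⟨J, hJprime⟩ = embB α b ⟨J, hJprime⟩ := by rw [hab]
    change (if a ∈ J then (0:ℝ) else 1) = (if b ∈ J then 0 else 1) at heq
    rw [if_neg haJ, if_pos hbJ] at heq
    exact one_ne_zero heq
  intro a b hab
  exact le_antisymm (key a b hab) (key b a hab.symm)

end Aux

/-- Coercion of a lattice into its bounded extension, as a lattice hom. -/
def coeHom (L : Type) [Lattice L] : LatticeHom L (WithBot (WithTop L)) where
  toFun x := ((x : WithTop L) : WithBot (WithTop L))
  map_sup' a b := by
    change (((a ⊔ b : L) : WithTop L) : WithBot (WithTop L)) = _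
    rw [WithTop.coe_sup, WithBot.coe_sup]
  map_inf' a b := by
    change (((a ⊓ b : L) : WithTop L) : WithBot (WithTop L)) = _
    rw [WithTop.coe_inf, WithBot.coe_inf]

lemma coeHom_injective (L : Type) [Lattice L] : Function.Injective (coeHom L) := by
  intro a b hab
  have hab' : ((a : WithTop L) : WithBot (WithTop L)) = ((b : WithTop L) : WithBot (WithTop L)) :=
    hab
  exact WithTop.coe_injective (WithBot.coe_injective hab')

/-- A lattice `L` is distributive if and only if there exist a Banach lattice `X`
and an injective lattice homomorphism from `L` into `X`. -/
theorem stmt_0 {L : Type} [Lattice L] :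
    (∀ x y z : L, x ⊓ (y ⊔ z) = (x ⊓ y) ⊔ (x ⊓ z)) ↔
      ∃ (X : Type) (_ : NormedAddCommGroup X) (_ : Lattice X)
        (_ : IsOrderedAddMonoid X) (_ : HasSolidNorm X) (_ : NormedSpace ℝ X)
        (_ : CompleteSpace X) (f : LatticeHom L X), Function.Injective f := by
  constructor
  · intro h
    letI : DistribLattice L := DistribLattice.ofInfSupLe fun a b c => (h a b c).le
    set α := WithBot (WithTop L)
    exact ⟨PrimeSpec α →ᵇ ℝ, inferInstance, inferInstance, inferInstance,
        inferInstance, inferInstance, inferInstance,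
      (embHom α).comp (coeHom L), (embHom_injective α).comp (coeHom_injective L)⟩
  · rintro ⟨X, i1, i2, i3, i4, i5, i6, f, hf⟩
    letI : DistribLattice X := AddCommGroup.toDistribLattice X
    intro x y z
    apply hf
    simp only [map_inf, map_sup]
    exact inf_sup_left _ _ _
end

section
/- Let L be a finite lattice with underlying set {0,...,n-1}. Then the set L* = {x ∈ [-1,1]^n : x, viewed as a function L → [-1,1], is a lattice homomorphism} is a finite union of closed convex subsets of ℝ^n. -/
lemma aux_convex_le {L : Type} (i j : L) : Convex ℝ {x : L → ℝ | x i ≤ x j} := by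
  intro x hx y hy a b ha hb hab
  simp only [Set.mem_setOf_eq, Pi.add_apply, Pi.smul_apply, smul_eq_mul] at *
  nlinarith

lemma aux_convex_eq {L : Type} (i j : L) : Convex ℝ {x : L → ℝ | x i = x j} := by
  intro x hx y hy a b ha hb hab
  simp only [Set.mem_setOf_eq, Pi.add_apply, Pi.smul_apply, smul_eq_mul] at *
  rw [hx, hy]

lemma aux_convex_Icc {L : Type} (i : L) :
    Convex ℝ {x : L → ℝ | x i ∈ Set.Icc (-1 : ℝ) 1} := by
  intro x hx y hy a b ha hb hab
  simp only [Set.mem_setOf_eq, Set.mem_Icc, Pi.add_apply, Pi.smul_apply, smul_eq_mul] at *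
  constructor <;> nlinarith [hx.1, hx.2, hy.1, hy.2]

/-- For a finite lattice `L` (identified with `{0,…,n-1}`), the set
`L* = {x ∈ [-1,1]^L : x is a lattice homomorphism L → [-1,1]}` is a finite union of
closed convex subsets of `ℝ^L`. -/
theorem stmt_3 {L : Type} [Lattice L] [Fintype L] :
    ∃ S : Finset (Set (L → ℝ)), (∀ C ∈ S, IsClosed C ∧ Convex ℝ C) ∧
      {x : L → ℝ | (∀ a, x a ∈ Set.Icc (-1 : ℝ) 1) ∧
          (∀ a b, x (a ⊔ b) = max (x a) (x b)) ∧ (∀ a b, x (a ⊓ b) = min (x a) (x b))} =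
        ⋃ C ∈ S, (C : Set (L → ℝ)) := by
  classical
  set C : (L × L → Bool) → Set (L → ℝ) := fun σ =>
    (⋂ a : L, {x : L → ℝ | x a ∈ Set.Icc (-1 : ℝ) 1}) ∩
    ⋂ p : L × L,
      ({x : L → ℝ | x (if σ p then p.1 else p.2) ≤ x (if σ p then p.2 else p.1)} ∩
       {x : L → ℝ | x (p.1 ⊔ p.2) = x (if σ p then p.2 else p.1)} ∩
       {x : L → ℝ | x (p.1 ⊓ p.2) = x (if σ p then p.1 else p.2)}) with hC
  refine ⟨Finset.univ.image C, ?_, ?_⟩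
  · intro c hc
    simp only [Finset.mem_image, Finset.mem_univ, true_and] at hc
    obtain ⟨σ, rfl⟩ := hc
    constructor
    · refine IsClosed.inter ?_ ?_
      · exact isClosed_iInter fun a => IsClosed.preimage (continuous_apply a) isClosed_Icc
      · apply isClosed_iInter
        intro p
        refine IsClosed.inter (IsClosed.inter ?_ ?_) ?_
        · exact isClosed_le (continuous_apply _) (continuous_apply _)
        · exact isClosed_eq (continuous_apply _) (continuous_apply _)
        · exact isClosed_eq (continuous_apply _) (continuous_apply _)
    · refine Convex.inter (convex_iInter fun a => aux_convex_Icc a)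
        (convex_iInter fun p => ?_)
      exact ((aux_convex_le _ _).inter (aux_convex_eq _ _)).inter (aux_convex_eq _ _)
  · ext x
    simp only [Set.mem_setOf_eq, Set.mem_iUnion, Finset.mem_image, Finset.mem_univ, true_and,
      exists_prop, exists_exists_eq_and]
    constructor
    · rintro ⟨hIcc, hsup, hinf⟩
      refine ⟨fun p => decide (x p.1 ≤ x p.2), Set.mem_inter ?_ ?_⟩
      · exact Set.mem_iInter.2 fun a => hIcc a
      · refine Set.mem_iInter.2 fun p => ?_
        by_cases h : x p.1 ≤ x p.2
        · refine ⟨⟨?_, ?_⟩, ?_⟩ <;> simp only [Set.mem_setOf_eq, h, decide_true, if_true]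
          · rw [hsup]; exact sup_eq_right.2 h
          · rw [hinf]; exact inf_eq_left.2 h
        · have h' : x p.2 ≤ x p.1 := le_of_not_ge h
          refine ⟨⟨?_, ?_⟩, ?_⟩ <;> simp only [Set.mem_setOf_eq, h, decide_false, if_false]
          · exact h'
          · rw [hsup]; exact sup_eq_left.2 h'
          · rw [hinf]; exact inf_eq_right.2 h'
    · rintro ⟨σ, hx1, hx2⟩
      refine ⟨fun a => Set.mem_iInter.1 hx1 a, fun a b => ?_, fun a b => ?_⟩
      all_goals {
        have hh := Set.mem_iInter.1 hx2 (a, b)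
        by_cases h : σ (a, b) = true <;> simp [h] at hh <;>
          obtain ⟨⟨hle, hs⟩, hi⟩ := hh
        · (first | rw [hs] | rw [hi]); first
            | exact (sup_eq_right.2 hle).symm
            | exact (inf_eq_left.2 hle).symm
        · (first | rw [hs] | rw [hi]); first
            | exact (sup_eq_left.2 hle).symm
            | exact (inf_eq_right.2 hle).symm }
end

section
/- For k ≥ 3, let W_k = {x ∈ [-1,1]^ℕ : x(i) < x(j) + 1/k whenever i < j < k}. Then each W_k is open in the product topology, W_{k+1} ⊆ W_k is not required, but the family {W_k : k ≥ 3} is a neighborhood basis of the set M of nondecreasing sequences: every open set U containing M contains some W_k. -/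
/-- The cube `[-1,1]^ℕ` with the product topology. -/
abbrev Cube : Type := ℕ → Set.Icc (-1 : ℝ) 1

/-- `W_k = {x ∈ [-1,1]^ℕ : x i < x j + 1/k whenever i < j < k}`. -/
def Wk (k : ℕ) : Set Cube :=
  {x | ∀ i j : ℕ, i < j → j < k → (x i : ℝ) < (x j : ℝ) + 1 / (k : ℝ)}

/-- `M` is the set of nondecreasing sequences in `[-1,1]^ℕ`. -/
def Mset : Set Cube := {x | Monotone fun n => (x n : ℝ)}

/-- Closed companion sets. -/
def Ck (k : ℕ) : Set Cube :=
  {x | ∀ i j : ℕ, i < j → j < k → (x i : ℝ) ≤ (x j : ℝ) + 1 / (k : ℝ)}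

lemma contEval (i : ℕ) : Continuous fun x : Cube => (x i : ℝ) :=
  continuous_subtype_val.comp (continuous_apply i)

lemma Ck_closed (k : ℕ) : IsClosed (Ck k) := by
  have : Ck k = ⋂ i ∈ Finset.range k, ⋂ j ∈ Finset.range k,
      {x : Cube | i < j → (x i : ℝ) ≤ (x j : ℝ) + 1 / (k : ℝ)} := by
    ext x
    simp only [Ck, Set.mem_setOf_eq, Set.mem_iInter, Finset.mem_range]
    constructor
    · intro h i _ j hj hij; exact h i j hij hj
    · intro h i j hij hj; exact h i (lt_trans hij hj) j hj hij
  rw [this]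
  refine isClosed_biInter fun i _ => isClosed_biInter fun j _ => ?_
  by_cases hij : i < j
  · have : {x : Cube | i < j → (x i : ℝ) ≤ (x j : ℝ) + 1 / (k : ℝ)} =
        {x : Cube | (x i : ℝ) ≤ (x j : ℝ) + 1 / (k : ℝ)} := by
      ext x; simp [hij]
    rw [this]
    exact isClosed_le (contEval i) ((contEval j).add continuous_const)
  · have : {x : Cube | i < j → (x i : ℝ) ≤ (x j : ℝ) + 1 / (k : ℝ)} = Set.univ := by
      ext x; simp [hij]
    rw [this]; exact isClosed_univ

lemma Ck_anti {k l : ℕ} (hkl : k ≤ l) : Ck l ⊆ Ck k := by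
  intro x hx i j hij hjk
  have hk0 : 0 < k := Nat.lt_of_le_of_lt (Nat.zero_le j) hjk
  have h1 : (x i : ℝ) ≤ (x j : ℝ) + 1 / (l : ℝ) := hx i j hij (lt_of_lt_of_le hjk hkl)
  have h2 : (1 : ℝ) / (l : ℝ) ≤ 1 / (k : ℝ) := by
    apply one_div_le_one_div_of_le
    · exact_mod_cast hk0
    · exact_mod_cast hkl
  linarith

lemma Wk_subset_Ck (k : ℕ) : Wk k ⊆ Ck k := fun x hx i j hij hjk =>
  le_of_lt (hx i j hij hjk)

lemma mem_Mset_of_mem_iInter {x : Cube} (hx : ∀ k : ℕ, x ∈ Ck k) : x ∈ Mset := by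
  intro i j hij
  rcases lt_or_eq_of_le hij with h | h
  · apply le_of_forall_pos_le_add
    intro ε hε
    obtain ⟨n, hn⟩ := exists_nat_one_div_lt hε
    set k := max (n + 1) (j + 1) with hk
    have hjk : j < k := lt_of_lt_of_le (Nat.lt_succ_self j) (le_max_right _ _)
    have h1 : (x i : ℝ) ≤ (x j : ℝ) + 1 / (k : ℝ) := hx k i j h hjk
    have h2 : (1 : ℝ) / (k : ℝ) ≤ 1 / ((n : ℝ) + 1) := by
      apply one_div_le_one_div_of_le
      · positivity
      · have : (n + 1 : ℕ) ≤ k := le_max_left _ _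
        exact_mod_cast this
    simp only [] at *
    linarith
  · subst h; exact le_refl _
    
/-- Each `W_k` (`k ≥ 3`) is open and contains `M`, and the family `{W_k : k ≥ 3}` is a
neighborhood basis of `M`: every open set containing `M` contains some `W_k`. -/
theorem stmt_9 :
    (∀ k : ℕ, 3 ≤ k → IsOpen (Wk k) ∧ Mset ⊆ Wk k) ∧
    ∀ U : Set Cube, IsOpen U → Mset ⊆ U → ∃ k : ℕ, 3 ≤ k ∧ Wk k ⊆ U := by
  constructor
  · intro k hk
    constructor
    · have : Wk k = ⋂ i ∈ Finset.range k, ⋂ j ∈ Finset.range k,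
          {x : Cube | i < j → (x i : ℝ) < (x j : ℝ) + 1 / (k : ℝ)} := by
        ext x
        simp only [Wk, Set.mem_setOf_eq, Set.mem_iInter, Finset.mem_range]
        constructor
        · intro h i _ j hj hij; exact h i j hij hj
        · intro h i j hij hj; exact h i (lt_trans hij hj) j hj hij
      rw [this]
      refine isOpen_biInter_finset fun i _ => isOpen_biInter_finset fun j _ => ?_
      by_cases hij : i < j
      · have : {x : Cube | i < j → (x i : ℝ) < (x j : ℝ) + 1 / (k : ℝ)} =
            {x : Cube | (x i : ℝ) < (x j : ℝ) + 1 / (k : ℝ)} := by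
          ext x; simp [hij]
        rw [this]
        exact isOpen_lt (contEval i) ((contEval j).add continuous_const)
      · have : {x : Cube | i < j → (x i : ℝ) < (x j : ℝ) + 1 / (k : ℝ)} = Set.univ := by
          ext x; simp [hij]
        rw [this]; exact isOpen_univ
    · intro x hx i j hij _
      have h1 : (x i : ℝ) ≤ (x j : ℝ) := hx (le_of_lt hij)
      have hk0 : (0 : ℝ) < 1 / (k : ℝ) := by
        apply one_div_pos.mpr; exact_mod_cast lt_of_lt_of_le (by norm_num) hk
      linarith
  · intro U hU hMU
    have hcomp : IsCompact Uᶜ := (hU.isClosed_compl).isCompact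
    have hempty : Uᶜ ∩ ⋂ k, Ck k = ∅ := by
      ext x
      simp only [Set.mem_inter_iff, Set.mem_compl_iff, Set.mem_iInter, Set.mem_empty_iff_false,
        iff_false, not_and]
      intro hxU hxC
      exact hxU (hMU (mem_Mset_of_mem_iInter hxC))
    obtain ⟨u, hu⟩ := hcomp.elim_finite_subfamily_closed Ck Ck_closed hempty
    refine ⟨max 3 (u.sup id + 1), le_max_left _ _, ?_⟩
    intro x hx
    by_contra hxU
    have hxC : x ∈ ⋂ i ∈ u, Ck i := by
      simp only [Set.mem_iInter]
      intro i hi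
      apply Ck_anti ?_ (Wk_subset_Ck _ hx)
      have : i ≤ u.sup id := Finset.le_sup (f := id) hi
      omega
    have : x ∈ Uᶜ ∩ ⋂ i ∈ u, Ck i := ⟨hxU, hxC⟩
    rw [hu] at this
    exact this
end

section
/- Suppose φ_i : [-1,1]^ℕ → ℝ, i = 1, 2, ..., are continuous functions (for the product topology) such that (1) φ_i(x) = x(i) whenever x is a nondecreasing sequence, and (2) φ_i(x) ≤ φ_{i+1}(x) for all x and i. Then the sequence of norms ‖φ_i‖ is unbounded, where ‖φ‖ = sup { Σ_{j=1}^m |r_j φ(x_j)| : m ∈ ℕ, r_j ∈ ℝ, x_j ∈ [-1,1]^ℕ, sup_{n ∈ ℕ} Σ_{j=1}^m |r_j x_j(n)| ≤ 1 }. -/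
/-- Truncated step sequence: `1` on `[k, N)`, `0` elsewhere. -/
def trSeq (k N : ℕ) : Cube := fun n =>
  if k ≤ n ∧ n < N then ⟨1, by norm_num⟩ else ⟨0, by norm_num⟩

/-- Step sequence: `1` on `[k, ∞)`, `0` elsewhere. -/
def stepSeq (k : ℕ) : Cube := fun n =>
  if k ≤ n then ⟨1, by norm_num⟩ else ⟨0, by norm_num⟩

lemma stepSeq_monotone (k : ℕ) : Monotone (fun n => ((stepSeq k n : ℝ))) := by
  intro a b hab
  simp only [stepSeq]
  split_ifs with h1 h2 <;> norm_num
  exact h2 (h1.trans hab)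

lemma tendsto_trSeq (k : ℕ) :
    Filter.Tendsto (fun N => trSeq k N) Filter.atTop (nhds (stepSeq k)) := by
  rw [tendsto_pi_nhds]
  intro n
  apply Filter.Tendsto.congr' (f₁ := fun _ => stepSeq k n) _ tendsto_const_nhds
  filter_upwards [Filter.eventually_gt_atTop n] with N hN
  simp [trSeq, stepSeq, hN]

/-- If `φ_i : [-1,1]^ℕ → ℝ` are continuous, agree with the `i`-th coordinate on
nondecreasing sequences, and are pointwise increasing in `i`, then the sequence of
free-Banach-lattice norms `‖φ_i‖` is unbounded: for every `C` there are an index `i`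
and an admissible family `(r_j, x_j)` witnessing `‖φ_i‖ > C`. -/
theorem stmt_10 (φ : ℕ → Cube → ℝ) (hcont : ∀ i, Continuous (φ i))
    (hmono : ∀ (i : ℕ) (x : Cube), Monotone (fun n => (x n : ℝ)) → φ i x = (x i : ℝ))
    (hinc : ∀ (i : ℕ) (x : Cube), φ i x ≤ φ (i + 1) x) :
    ∀ C : ℝ, ∃ (i m : ℕ) (r : Fin m → ℝ) (x : Fin m → Cube),
      (∀ n : ℕ, ∑ j, |r j * (x j n : ℝ)| ≤ 1) ∧ C < ∑ j, |r j * φ i (x j)| := by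
  have hφmono : ∀ x : Cube, Monotone fun i => φ i x := fun x =>
    monotone_nat_of_le_succ (fun i => hinc i x)
  -- for every k there is N > k with φ k (trSeq k N) > 1/2
  have hex : ∀ k : ℕ, ∃ N : ℕ, k < N ∧ 1 / 2 < φ k (trSeq k N) := by
    intro k
    have h1 : φ k (stepSeq k) = 1 := by
      rw [hmono k (stepSeq k) (stepSeq_monotone k)]
      simp [stepSeq]
    have htd : Filter.Tendsto (fun N => φ k (trSeq k N)) Filter.atTop (nhds 1) := by
      have := ((hcont k).tendsto (stepSeq k)).comp (tendsto_trSeq k)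
      rwa [h1] at this
    have hev := (htd.eventually (eventually_gt_nhds (by norm_num : (1 / 2 : ℝ) < 1))).and
      (Filter.eventually_gt_atTop k)
    obtain ⟨N, hN1, hN2⟩ := hev.exists
    exact ⟨N, hN2, hN1⟩
  choose nextN hlt hval using hex
  -- recursive sequence of cut points
  set K : ℕ → ℕ := fun j => Nat.rec 0 (fun _ ih => nextN ih) j with hK
  have hKsucc : ∀ j, K (j + 1) = nextN (K j) := fun j => rfl
  have hKmono : StrictMono K := strictMono_nat_of_lt_succ (fun j => by
    rw [hKsucc]; exact hlt (K j))
  intro C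
  obtain ⟨m, hm⟩ := exists_nat_gt (2 * C)
  refine ⟨K m, m, fun _ => 1, fun j => trSeq (K j) (K (j + 1)), ?_, ?_⟩
  · -- disjoint supports
    intro n
    have : ∀ j : Fin m, |(1 : ℝ) * ((trSeq (K j) (K (j + 1)) n : ℝ))| =
        if K j ≤ n ∧ n < K (j + 1) then (1 : ℝ) else 0 := by
      intro j
      simp only [trSeq, one_mul]
      split_ifs <;> norm_num
    rw [Finset.sum_congr rfl (fun j _ => this j), Finset.sum_boole]
    have hcard : (Finset.univ.filter fun j : Fin m => K j ≤ n ∧ n < K (j + 1)).card ≤ 1 := by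
      apply Finset.card_le_one.2
      intro a ha b hb
      simp only [Finset.mem_filter] at ha hb
      by_contra hne
      rcases lt_or_gt_of_ne hne with h | h
      · have h' : (a : ℕ) < (b : ℕ) := h
        have h2 : K ((a : ℕ) + 1) ≤ K (b : ℕ) := hKmono.monotone h'
        omega
      · have h' : (b : ℕ) < (a : ℕ) := h
        have h2 : K ((b : ℕ) + 1) ≤ K (a : ℕ) := hKmono.monotone h'
        omega
    exact_mod_cast hcard
  · -- sum is large
    have hterm : ∀ j : Fin m, 1 / 2 ≤ |(1 : ℝ) * φ (K m) (trSeq (K j) (K (j + 1)))| := by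
      intro j
      have h1 : (1 / 2 : ℝ) < φ (K j) (trSeq (K j) (K (j + 1))) := by
        rw [hKsucc]; exact hval (K j)
      have h2 : φ (K j) (trSeq (K j) (K (j + 1))) ≤ φ (K m) (trSeq (K j) (K (j + 1))) :=
        hφmono _ (hKmono.monotone (le_of_lt j.isLt))
      rw [one_mul]
      exact le_trans (le_of_lt h1) (le_trans h2 (le_abs_self _))
    calc C < m / 2 := by linarith
    _ = ∑ _j : Fin m, (1 / 2 : ℝ) := by
        rw [Finset.sum_const, Finset.card_univ, Fintype.card_fin]
        ring
    _ ≤ _ := Finset.sum_le_sum (fun j _ => hterm j)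
end

section
/- Let P and P' be Banach lattices and let π̃ : P → P' and ι̃ : P' → P be Banach lattice homomorphisms with ‖ι̃‖ = ‖π̃‖ = 1 and π̃ ∘ ι̃ = id_{P'}. If P is projective, then P' is projective. -/
/-- A map between Banach lattices preserves the (finite) lattice operations. Together
with being a continuous linear map, this makes it a Banach lattice homomorphism. -/
def IsLatticeOpPreserving {X Y : Type} [Lattice X] [Lattice Y] (f : X → Y) : Prop :=
  (∀ a b : X, f (a ⊔ b) = f a ⊔ f b) ∧ (∀ a b : X, f (a ⊓ b) = f a ⊓ f b)

/-- `Q : X → Y` is a quotient map of Banach lattices: a surjective map with the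
quotient-norm lifting property (equivalently, `Y` is isometrically lattice-isomorphic
to `X/J` for the closed ideal `J = ker Q`, with `Q` the quotient map). -/
def IsQuotientOperator {X Y : Type} [NormedAddCommGroup X] [Lattice X] [IsOrderedAddMonoid X] [HasSolidNorm X] [NormedSpace ℝ X]
    [NormedAddCommGroup Y] [Lattice Y] [IsOrderedAddMonoid Y] [HasSolidNorm Y] [NormedSpace ℝ Y] (Q : X →L[ℝ] Y) : Prop :=
  Function.Surjective Q ∧ ∀ y : Y, ∀ c : ℝ, ‖y‖ < c → ∃ x : X, Q x = y ∧ ‖x‖ < c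

/-- A Banach lattice `P` is projective if for every Banach lattice quotient map
`Q : X → X/J` and every Banach lattice homomorphism `T : P → X/J` and `ε > 0` there is
a Banach lattice homomorphism `T̂ : P → X` with `Q ∘ T̂ = T` and `‖T̂‖ ≤ (1+ε)‖T‖`. -/
def IsProjectiveBanachLattice (P : Type) [NormedAddCommGroup P] [Lattice P] [IsOrderedAddMonoid P] [HasSolidNorm P]
    [NormedSpace ℝ P] [CompleteSpace P] : Prop :=
  ∀ (X Y : Type) [NormedAddCommGroup X] [Lattice X] [IsOrderedAddMonoid X] [HasSolidNorm X] [NormedSpace ℝ X] [CompleteSpace X]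
    [NormedAddCommGroup Y] [Lattice Y] [IsOrderedAddMonoid Y] [HasSolidNorm Y] [NormedSpace ℝ Y] [CompleteSpace Y],
    ∀ Q : X →L[ℝ] Y, IsLatticeOpPreserving Q → IsQuotientOperator Q →
      ∀ T : P →L[ℝ] Y, IsLatticeOpPreserving T →
        ∀ ε : ℝ, 0 < ε → ∃ T' : P →L[ℝ] X, IsLatticeOpPreserving T' ∧
          (∀ p, Q (T' p) = T p) ∧ ‖T'‖ ≤ (1 + ε) * ‖T‖

/-- If `π̃ : P → P'` and `ι̃ : P' → P` are norm-one Banach lattice homomorphisms with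
`π̃ ∘ ι̃ = id` and `P` is projective, then `P'` is projective. -/
theorem stmt_16 {P P' : Type}
    [NormedAddCommGroup P] [Lattice P] [IsOrderedAddMonoid P] [HasSolidNorm P] [NormedSpace ℝ P] [CompleteSpace P]
    [NormedAddCommGroup P'] [Lattice P'] [IsOrderedAddMonoid P'] [HasSolidNorm P'] [NormedSpace ℝ P'] [CompleteSpace P']
    (πt : P →L[ℝ] P') (ιt : P' →L[ℝ] P)
    (hπlat : IsLatticeOpPreserving πt) (hιlat : IsLatticeOpPreserving ιt)
    (hπnorm : ‖πt‖ = 1) (hιnorm : ‖ιt‖ = 1)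
    (hretr : ∀ p' : P', πt (ιt p') = p')
    (hP : IsProjectiveBanachLattice P) :
    IsProjectiveBanachLattice P' := by
  intro X Y _ _ _ _ _ _ _ _ _ _ _ _ Q hQlat hQ T hTlat ε hε
  obtain ⟨S, hSlat, hSQ, hSnorm⟩ := hP X Y Q hQlat hQ (T.comp πt)
    ⟨fun a b => by simp [hπlat.1 a b, hTlat.1], fun a b => by simp [hπlat.2 a b, hTlat.2]⟩ ε hε
  refine ⟨S.comp ιt, ⟨fun a b => by simp [hιlat.1 a b, hSlat.1],
    fun a b => by simp [hιlat.2 a b, hSlat.2]⟩, fun p' => by simpa [hretr p'] using hSQ (ιt p'), ?_⟩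
  calc ‖S.comp ιt‖ ≤ ‖S‖ * ‖ιt‖ := ContinuousLinearMap.opNorm_comp_le _ _
    _ = ‖S‖ := by rw [hιnorm, mul_one]
    _ ≤ (1 + ε) * ‖T.comp πt‖ := hSnorm
    _ ≤ (1 + ε) * (‖T‖ * ‖πt‖) :=
        mul_le_mul_of_nonneg_left (ContinuousLinearMap.opNorm_comp_le _ _) (by linarith)
    _ = (1 + ε) * ‖T‖ := by rw [hπnorm, mul_one]
end
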